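/- Let u : ℝ → (0,∞) be continuous with u(x) = u(−x) for all x ∈ ℝ and liminf_{|x|→∞} u(x) = 0. Suppose that for every x ∈ ℝ, either u(y) ≥ u(2x − y) for all y ≥ x, or u(y) ≤ u(2x − y) for all y ≥ x. Then u is nonincreasing on [0, ∞). -/
import Mathlib


/-- A continuous, positive, even function `u` on `ℝ` with
`liminf_{|x|→∞} u(x) = 0` which is separable (for each reflection point `x`, one side
dominates the other under the reflection `y ↦ 2x − y`) is nonincreasing on `[0,∞)`. -/
theorem stmt_14 (u : ℝ → ℝ)
    (hpos : ∀ x, 0 < u x)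
    (hcont : Continuous u)
    (heven : ∀ x, u (-x) = u x)
    (hinf : ∀ ε > (0 : ℝ), ∀ M > (0 : ℝ), ∃ x : ℝ, M < |x| ∧ u x < ε)
    (hsep : ∀ x : ℝ,
      (∀ y, x ≤ y → u (2 * x - y) ≤ u y) ∨
      (∀ y, x ≤ y → u y ≤ u (2 * x - y))) :
    AntitoneOn u (Set.Ici 0) := by
  have key : ∀ x : ℝ, 0 < x → ∀ y, x ≤ y → u y ≤ u (2 * x - y) := by
    intro x hx
    rcases hsep x with hA | hB
    · exfalso
      obtain ⟨c, hc, hmin⟩ := isCompact_Icc.exists_isMinOn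
        (Set.nonempty_Icc.2 (by linarith : -x ≤ x)) hcont.continuousOn
      have hm : 0 < u c := hpos c
      obtain ⟨z, hz, huz⟩ := hinf (u c) hm x hx
      have claim : ∀ n : ℕ, ∀ w, -x ≤ w → w ≤ x + 2 * n * x → u c ≤ u w := by
        intro n
        induction n with
        | zero =>
          intro w h1 h2
          exact hmin ⟨h1, by simpa using h2⟩
        | succ k ih =>
          intro w h1 h2
          by_cases hw : w ≤ x + 2 * k * x
          · exact ih w h1 hw
          · push_neg at hw
            have hk : (0:ℝ) ≤ (k : ℝ) := k.cast_nonneg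
            have hwx : x ≤ w := le_trans (by nlinarith) hw.le
            have h3 : u (2 * x - w) ≤ u w := hA w hwx
            have h4 : u (w - 2 * x) = u (2 * x - w) := by
              rw [← heven (w - 2 * x)]; ring_nf
            have h5 : u c ≤ u (w - 2 * x) := by
              refine ih (w - 2 * x) (by linarith) ?_
              push_cast at h2 ⊢; linarith
            linarith [h4.le]
      have hz0 : u c ≤ u |z| := by
        obtain ⟨n, hn⟩ := exists_nat_ge (|z| / x)
        have hle : |z| ≤ x + 2 * n * x := by
          have := (div_le_iff₀ hx).mp hn
          nlinarith [abs_nonneg z]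
        exact claim n |z| (by linarith [abs_nonneg z]) hle
      have habs : u |z| = u z := by
        rcases abs_cases z with ⟨h, _⟩ | ⟨h, _⟩
        · rw [h]
        · rw [h, heven]
      linarith
    · exact hB
  intro a ha b hb hab
  rcases eq_or_lt_of_le hab with rfl | h
  · exact le_rfl
  · have hx : 0 < (a + b) / 2 := by
      have ha' : (0:ℝ) ≤ a := ha
      linarith
    have hkey := key ((a + b) / 2) hx b (by linarith)
    have h2 : 2 * ((a + b) / 2) - b = a := by ring
    rwa [h2] at hkey
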